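/- Let n ≥ 2 be even and let a_1, …, a_n be integers with a_i ≥ 2. Let E be the loop exponent matrix (diagonal a_i, superdiagonal 1, corner entry E_{n,1} = 1, other entries 0), ρ_j^{(i)} = (E^{-1})_{ij}, and q_i = Σ_j (E^{-1})_{ij}. Then for every 1 ≤ i ≤ n, q_i + Σ_{j odd} (a_j − 1) ρ_j^{(i)} ∈ ℤ and q_i + Σ_{j even} (a_j − 1) ρ_j^{(i)} ∈ ℤ. -/

import Mathlib

lemma loop_mulVec_aux {n : ℕ} (hn : 2 ≤ n) (a : ℕ → ℕ)
    (E : Matrix (Fin n) (Fin n) ℚ)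
    (hE : ∀ i j : Fin n, E i j =
      if i = j then (a i : ℚ)
      else if (i : ℕ) + 1 = (j : ℕ) then 1
      else if (i : ℕ) = n - 1 ∧ (j : ℕ) = 0 then 1 else 0)
    (x : Fin n → ℚ) (i : Fin n) :
    E.mulVec x i = (a i : ℚ) * x i + x ⟨((i : ℕ) + 1) % n, Nat.mod_lt _ (by omega)⟩ := by
  set s : Fin n := ⟨((i : ℕ) + 1) % n, Nat.mod_lt _ (by omega)⟩ with hs
  have hi := i.isLt
  have hsv : (s : ℕ) = ((i : ℕ) + 1) % n := rfl
  have hsv' : ((i : ℕ) + 1 < n ∧ (s : ℕ) = (i : ℕ) + 1) ∨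
      ((i : ℕ) + 1 = n ∧ (s : ℕ) = 0) := by
    rcases Nat.lt_or_ge ((i : ℕ) + 1) n with hlt | hge
    · exact Or.inl ⟨hlt, by rw [hsv, Nat.mod_eq_of_lt hlt]⟩
    · have h2 : (i : ℕ) + 1 = n := by omega
      exact Or.inr ⟨h2, by rw [hsv, h2, Nat.mod_self]⟩
  have key : ∀ j : Fin n, E i j * x j =
      (if i = j then (a i : ℚ) * x j else 0) + (if s = j then x j else 0) := by
    intro j
    have hj := j.isLt
    rw [hE i j]
    simp only [Fin.ext_iff]
    rcases hsv' with ⟨h1, h2⟩ | ⟨h1, h2⟩ <;> rw [hsv] at h2 <;> simp only [h2, hsv] <;>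
      split_ifs
    all_goals try ring1
    all_goals exfalso
    all_goals omega
  calc E.mulVec x i = ∑ j, E i j * x j := rfl
    _ = ∑ j, ((if i = j then (a i : ℚ) * x j else 0) + (if s = j then x j else 0)) :=
        Finset.sum_congr rfl fun j _ => key j
    _ = (a i : ℚ) * x i + x s := by
        rw [Finset.sum_add_distrib, Finset.sum_ite_eq, Finset.sum_ite_eq]
        simp



/-- For the loop exponent matrix `E` with `n` even, with
`ρ_j^{(i)} = (E⁻¹) i j` and `q i = ∑_j (E⁻¹) i j`, both
`q i + ∑_{j odd} (a_j − 1) ρ_j^{(i)}` and `q i + ∑_{j even} (a_j − 1) ρ_j^{(i)}`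
are integers for every `i`. Indices are `0`-based via `Fin n`, and the `1`-based
parity of `j : Fin n` is the parity of `(j : ℕ) + 1`. -/
theorem loop_special_vectors_integral {n : ℕ} (hn : 2 ≤ n) (hev : Even n)
    (a : ℕ → ℕ) (ha : ∀ i < n, 2 ≤ a i)
    (E : Matrix (Fin n) (Fin n) ℚ)
    (hE : ∀ i j : Fin n, E i j =
      if i = j then (a i : ℚ)
      else if (i : ℕ) + 1 = (j : ℕ) then 1
      else if (i : ℕ) = n - 1 ∧ (j : ℕ) = 0 then 1 else 0) :
    ∀ i : Fin n,
      (∃ z : ℤ, (∑ j : Fin n, E⁻¹ i j) +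
        (∑ j ∈ Finset.univ.filter (fun j : Fin n => ((j : ℕ) + 1) % 2 = 1),
          ((a (j : ℕ) : ℚ) - 1) * E⁻¹ i j) = z) ∧
      (∃ z : ℤ, (∑ j : Fin n, E⁻¹ i j) +
        (∑ j ∈ Finset.univ.filter (fun j : Fin n => ((j : ℕ) + 1) % 2 = 0),
          ((a (j : ℕ) : ℚ) - 1) * E⁻¹ i j) = z) := by
  intro i
  by_cases hdet : IsUnit E.det
  · -- main case
    obtain ⟨m, hm⟩ := hev
    -- general engine: for a parity r, with x the indicator of class r,
    -- the target expression equals x i.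
    have engine : ∀ r : ℕ, r < 2 →
        (∑ j : Fin n, E⁻¹ i j) +
        (∑ j ∈ Finset.univ.filter (fun j : Fin n => ((j : ℕ) + 1) % 2 = 1 - r),
          ((a (j : ℕ) : ℚ) - 1) * E⁻¹ i j) =
        (fun j : Fin n => if (j : ℕ) % 2 = r then (1 : ℚ) else 0) i := by
      intro r hr
      set x : Fin n → ℚ := fun j => if (j : ℕ) % 2 = r then (1 : ℚ) else 0 with hx
      set b : Fin n → ℚ := fun j =>
        1 + (if ((j : ℕ) + 1) % 2 = 1 - r then (a (j : ℕ) : ℚ) - 1 else 0) with hb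
      have hEx : E.mulVec x = b := by
        funext k
        rw [loop_mulVec_aux hn a E hE x k]
        have hk := k.isLt
        have hsval : ((((k : ℕ) + 1) % n) % 2) = ((k : ℕ) + 1) % 2 := by
          rcases Nat.lt_or_ge ((k : ℕ) + 1) n with hlt | hge
          · rw [Nat.mod_eq_of_lt hlt]
          · have h2 : (k : ℕ) + 1 = n := by omega
            rw [h2, Nat.mod_self]
            omega
        simp only [hx, hb, hsval]
        by_cases hpar : (k : ℕ) % 2 = r
        · rw [if_pos hpar, if_neg (by omega), if_pos (by omega)]
          ring
        · rw [if_neg hpar, if_pos (by omega), if_neg (by omega)]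
          ring
      have hxval : E⁻¹.mulVec b = x := by
        rw [← hEx, Matrix.mulVec_mulVec, Matrix.nonsing_inv_mul E hdet,
          Matrix.one_mulVec]
      have : ∑ j : Fin n, E⁻¹ i j * b j = x i := by
        rw [← hxval]; rfl
      rw [← this]
      rw [Finset.sum_filter]
      rw [← Finset.sum_add_distrib]
      apply Finset.sum_congr rfl
      intro j _
      simp only [hb]
      by_cases hp : ((j : ℕ) + 1) % 2 = 1 - r
      · rw [if_pos hp, if_pos hp]; ring
      · rw [if_neg hp, if_neg hp]; ring
    constructor
    · have h0 := engine 0 (by omega)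
      simp only [Nat.sub_zero] at h0
      rw [h0]
      by_cases h : (i : ℕ) % 2 = 0
      · exact ⟨1, by simp [h]⟩
      · exact ⟨0, by simp [h]⟩
    · have h1 := engine 1 (by omega)
      simp only [Nat.sub_self] at h1
      rw [h1]
      by_cases h : (i : ℕ) % 2 = 1
      · exact ⟨1, by simp [h]⟩
      · exact ⟨0, by simp [h]⟩
  · rw [Matrix.nonsing_inv_apply_not_isUnit E hdet]
    simp only [Matrix.zero_apply, mul_zero, Finset.sum_const_zero, add_zero]
    exact ⟨⟨0, by simp⟩, ⟨0, by simp⟩⟩
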